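/- arXiv:2212.00433 — 2 statements merged into one kernel-verified Lean document; each statement's English description precedes it below -/
import Mathlib

section
/- Let n, p be positive natural numbers with n ≤ p, and let A ∈ ℝ^{n×p} be a random matrix whose entries are i.i.d. standard Gaussian N(0,1). Then, almost surely, the matrix AAᵀ ∈ ℝ^{n×n} is invertible (equivalently, A has full row rank n). -/
open MeasureTheory ProbabilityTheory Matrix

namespace GaussAux

lemma measurable_eval {σ : Type*} (P : MvPolynomial σ ℝ) :
    Measurable fun x : σ → ℝ => MvPolynomial.eval x P := by
  induction P using MvPolynomial.induction_on with
  | C a => simpa using measurable_const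
  | add p q hp hq => simp only [map_add]; exact hp.add hq
  | mul_X p i hp => simp only [map_mul, MvPolynomial.eval_X]; exact hp.mul (measurable_pi_apply i)

lemma measurable_cons {k : ℕ} :
    Measurable fun q : ℝ × (Fin k → ℝ) => (Fin.cons q.1 q.2 : Fin (k + 1) → ℝ) := by
  refine measurable_pi_iff.2 fun i => ?_
  refine Fin.cases ?_ ?_ i
  · simpa using measurable_fst
  · intro j; simp only [Fin.cons_succ]; exact (measurable_pi_apply j).comp measurable_snd

lemma key_fin (k : ℕ) (P : MvPolynomial (Fin k) ℝ) (hP : P ≠ 0) :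
    (Measure.pi fun _ : Fin k => gaussianReal 0 1) {x | MvPolynomial.eval x P = 0} = 0 := by
  induction k with
  | zero =>
    obtain ⟨c, rfl⟩ := MvPolynomial.C_surjective (Fin 0) P
    have hc : c ≠ 0 := fun h => hP (by simp [h])
    exact measure_mono_null (t := ∅) (fun x hx => absurd (by simpa using hx) hc)
      measure_empty
  | succ k ih =>
    set γ : Measure ℝ := gaussianReal 0 1 with hγ
    set μk : Measure (Fin k → ℝ) := Measure.pi fun _ : Fin k => gaussianReal 0 1 with hμk
    set Q : Polynomial (MvPolynomial (Fin k) ℝ) := MvPolynomial.finSuccEquiv ℝ k P with hQdef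
    have hQ : Q ≠ 0 := fun h =>
      hP ((MvPolynomial.finSuccEquiv ℝ k).injective (h.trans (map_zero _).symm))
    set T : Set (ℝ × (Fin k → ℝ)) :=
      {q | MvPolynomial.eval (Fin.cons q.1 q.2 : Fin (k + 1) → ℝ) P = 0} with hTdef
    have hT : MeasurableSet T :=
      ((measurable_eval P).comp measurable_cons) (measurableSet_singleton 0)
    have h1 : (Measure.pi fun _ : Fin (k + 1) => gaussianReal 0 1)
        {x | MvPolynomial.eval x P = 0} = (γ.prod μk) T := by
      have MP := measurePreserving_piFinSuccAbove
        (fun _ : Fin (k + 1) => gaussianReal 0 1) 0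
      rw [← MP.measure_preimage hT.nullMeasurableSet]
      congr 1
      ext x
      simp [T, MeasurableEquiv.piFinSuccAbove, Fin.insertNthEquiv, Fin.cons_self_tail,
        Fin.succAbove_zero]
    have h2 : (γ.prod μk) T = (μk.prod γ) (Prod.swap ⁻¹' T) := by
      rw [← Measure.prod_swap, Measure.map_apply measurable_swap hT]
    rw [h1, h2, Measure.measure_prod_null (measurable_swap hT)]
    have hae : ∀ᵐ s ∂μk, MvPolynomial.eval s Q.leadingCoeff ≠ 0 := by
      have h0 := ih Q.leadingCoeff (Polynomial.leadingCoeff_ne_zero.2 hQ)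
      rw [ae_iff]
      simpa using h0
    filter_upwards [hae] with s hs
    set q : Polynomial ℝ := Q.map (MvPolynomial.eval s) with hqdef
    have hq : q ≠ 0 := by
      intro h
      apply hs
      have h2 : q.coeff Q.natDegree = 0 := by rw [h]; simp
      rw [hqdef, Polynomial.coeff_map] at h2
      exact h2
    have hset : Prod.mk s ⁻¹' (Prod.swap ⁻¹' T) = {y | Polynomial.eval y q = 0} := by
      ext y
      show MvPolynomial.eval (Fin.cons y s : Fin (k + 1) → ℝ) P = 0 ↔
        Polynomial.eval y (Polynomial.map (MvPolynomial.eval s)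
          (MvPolynomial.finSuccEquiv ℝ k P)) = 0
      rw [MvPolynomial.eval_eq_eval_mv_eval']
    have hvol : (volume : Measure ℝ) {y | Polynomial.eval y q = 0} = 0 :=
      Set.Countable.measure_zero (Polynomial.finite_setOf_isRoot hq).countable _
    have hγ0 : γ {y | Polynomial.eval y q = 0} = 0 :=
      gaussianReal_absolutelyContinuous 0 one_ne_zero hvol
    simpa [hset] using hγ0

lemma key {ι : Type*} [Fintype ι] (P : MvPolynomial ι ℝ) (hP : P ≠ 0) :
    (Measure.pi fun _ : ι => gaussianReal 0 1) {x | MvPolynomial.eval x P = 0} = 0 := by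
  obtain ⟨k, ⟨f⟩⟩ : ∃ k, Nonempty (Fin k ≃ ι) :=
    ⟨Fintype.card ι, ⟨(Fintype.equivFin ι).symm⟩⟩
  have MP := measurePreserving_piCongrLeft (fun _ : ι => gaussianReal 0 1) f
  have hS : MeasurableSet {x : ι → ℝ | MvPolynomial.eval x P = 0} :=
    (measurable_eval P) (measurableSet_singleton 0)
  rw [← MP.measure_preimage hS.nullMeasurableSet]
  have hpre : (MeasurableEquiv.piCongrLeft (fun _ : ι => ℝ) f) ⁻¹'
      {x : ι → ℝ | MvPolynomial.eval x P = 0}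
      = {g : Fin k → ℝ | MvPolynomial.eval g (MvPolynomial.rename f.symm P) = 0} := by
    ext g
    have hg : (MeasurableEquiv.piCongrLeft (fun _ : ι => ℝ) f) g = g ∘ ⇑f.symm := by
      funext i
      simp [MeasurableEquiv.piCongrLeft, Equiv.piCongrLeft_apply]
    simp [hg, MvPolynomial.eval_rename, Function.comp]
  rw [hpre]
  exact key_fin k _ fun h => hP (by simpa using congrArg (MvPolynomial.rename (f : Fin k ≃ ι).symm.symm) h)

end GaussAux

/-- If `n ≤ p` and `A ∈ ℝ^{n×p}` has i.i.d. standard Gaussian entries, then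
almost surely `AAᵀ` is invertible (equivalently, `A` has full row rank `n`). -/
theorem gaussian_matrix_full_row_rank
    (n p : ℕ) (hn : 0 < n) (hp : 0 < p) (hnp : n ≤ p) :
    ∀ᵐ A ∂(Measure.pi fun _ : Fin n => Measure.pi fun _ : Fin p => gaussianReal 0 1),
      IsUnit (Matrix.of A * (Matrix.of A)ᵀ).det := by
  set ν := Measure.pi fun _ : Fin n => Measure.pi fun _ : Fin p => gaussianReal 0 1 with hν
  set P : MvPolynomial (Fin n × Fin p) ℝ :=
    (Matrix.of fun i k : Fin n =>
      ∑ j : Fin p, MvPolynomial.X (i, j) * MvPolynomial.X (k, j)).det with hPdef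
  have hPev : ∀ x : Fin n × Fin p → ℝ, MvPolynomial.eval x P =
      (Matrix.of fun i k : Fin n => ∑ j : Fin p, x (i, j) * x (k, j)).det := by
    intro x
    rw [hPdef, RingHom.map_det]
    congr 1
    ext i k
    simp [Matrix.map_apply]
  have hP : P ≠ 0 := by
    intro h
    have h1 : MvPolynomial.eval
        (fun q : Fin n × Fin p => if q.2 = Fin.castLE hnp q.1 then (1 : ℝ) else 0) P = 1 := by
      rw [hPev]
      have : (Matrix.of fun i k : Fin n => ∑ j : Fin p,
          (if j = Fin.castLE hnp i then (1 : ℝ) else 0) *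
          (if j = Fin.castLE hnp k then (1 : ℝ) else 0)) = (1 : Matrix (Fin n) (Fin n) ℝ) := by
        ext i k
        simp only [Matrix.of_apply, ite_mul, one_mul, zero_mul]
        rw [Finset.sum_ite_eq' Finset.univ (Fin.castLE hnp i)]
        simp [Matrix.one_apply, Fin.castLE_inj, eq_comm]
      rw [this, Matrix.det_one]
    rw [h] at h1
    simp at h1
  set e : (Fin n → Fin p → ℝ) → (Fin n × Fin p → ℝ) := fun A q => A q.1 q.2 with he_def
  have he : Measurable e := measurable_pi_iff.2 fun q =>
    (measurable_pi_apply q.2).comp (measurable_pi_apply q.1)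
  have hmap : ν.map e = Measure.pi fun _ : Fin n × Fin p => gaussianReal 0 1 := by
    refine (Measure.pi_eq fun s hs => ?_).symm
    rw [Measure.map_apply he (MeasurableSet.univ_pi hs)]
    have hpre : e ⁻¹' Set.pi Set.univ s
        = Set.pi Set.univ fun i => Set.pi Set.univ fun j => s (i, j) := by
      ext A
      simp [Set.mem_pi, e, Prod.forall]
    rw [hpre, hν, Measure.pi_pi]
    simp_rw [Measure.pi_pi]
    exact (Fintype.prod_prod_type (f := fun q : Fin n × Fin p => (gaussianReal 0 1) (s q))).symm
  have h0 : ν {A | MvPolynomial.eval (e A) P = 0} = 0 := by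
    have hS2 : MeasurableSet {x : Fin n × Fin p → ℝ | MvPolynomial.eval x P = 0} :=
      (GaussAux.measurable_eval P) (measurableSet_singleton 0)
    have hkey := GaussAux.key P hP
    rw [← hmap, Measure.map_apply he hS2] at hkey
    exact hkey
  rw [ae_iff]
  refine measure_mono_null ?_ h0
  intro A hA
  simp only [Set.mem_setOf_eq] at hA ⊢
  rw [hPev]
  have hmat : (Matrix.of fun i k : Fin n => ∑ j : Fin p, e A (i, j) * e A (k, j))
      = Matrix.of A * (Matrix.of A)ᵀ := by
    ext i k
    simp [Matrix.mul_apply, e]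
  rw [hmat]
  by_contra hne
  exact hA (isUnit_iff_ne_zero.2 hne)
end

section
/- Let n, p be positive natural numbers, let A ∈ ℝ^{n×p}, let λ > 0, and let a, b ≥ 0 be such that AAᵀ − a² I_n and b² I_n − AAᵀ are both positive semidefinite (i.e., every eigenvalue of AAᵀ lies in [a², b²]). Then for every z ∈ ℝ^n, ‖Aᵀ(AAᵀ + λ I_n)⁻¹ z‖ ≤ (b / (a² + λ)) ‖z‖. -/
open Matrix


private lemma ridge_aux (S W Z D b c : ℝ) (hc : 0 < c) (hb : 0 ≤ b)
    (hWnn : 0 ≤ W) (hZnn : 0 ≤ Z)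
    (hup : S ≤ b ^ 2 * W) (hlow : c * W ≤ D) (hcs : D ^ 2 ≤ W * Z) :
    S ≤ (b / c) ^ 2 * Z := by
  have hD : 0 ≤ D := le_trans (mul_nonneg hc.le hWnn) hlow
  have hsq : (c * W) ^ 2 ≤ W * Z :=
    le_trans (pow_le_pow_left₀ (mul_nonneg hc.le hWnn) hlow 2) hcs
  rw [div_pow, div_mul_eq_mul_div, le_div_iff₀ (by positivity)]
  rcases eq_or_lt_of_le hWnn with h | h
  · have hS0 : S ≤ 0 := by rw [← h] at hup; linarith
    nlinarith [hZnn, sq_nonneg b]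
  · have h2 : c ^ 2 * W ≤ Z := by nlinarith [hsq]
    nlinarith [hup, mul_le_mul_of_nonneg_left h2 (sq_nonneg b)]

/-- If every eigenvalue of `AAᵀ` lies in `[a², b²]` (i.e. both `AAᵀ − a²Iₙ`
and `b²Iₙ − AAᵀ` are positive semidefinite), then
`‖Aᵀ(AAᵀ + λIₙ)⁻¹ z‖ ≤ (b/(a² + λ)) ‖z‖` for every `z ∈ ℝⁿ`. -/
theorem ridge_noise_operator_bound
    (n p : ℕ) (hn : 0 < n) (hp : 0 < p)
    (A : Matrix (Fin n) (Fin p) ℝ) (lam : ℝ) (hlam : 0 < lam)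
    (a b : ℝ) (ha : 0 ≤ a) (hb : 0 ≤ b)
    (hlower : (A * Aᵀ - a ^ 2 • (1 : Matrix (Fin n) (Fin n) ℝ)).PosSemidef)
    (hupper : (b ^ 2 • (1 : Matrix (Fin n) (Fin n) ℝ) - A * Aᵀ).PosSemidef) :
    ∀ z : Fin n → ℝ,
      Real.sqrt (∑ j,
          (((Aᵀ * (A * Aᵀ + lam • (1 : Matrix (Fin n) (Fin n) ℝ))⁻¹) *ᵥ z) j) ^ 2) ≤
        (b / (a ^ 2 + lam)) * Real.sqrt (∑ i, (z i) ^ 2) := by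
  intro z
  set M : Matrix (Fin n) (Fin n) ℝ := A * Aᵀ + lam • (1 : Matrix (Fin n) (Fin n) ℝ) with hMdef
  have hAAT : (A * Aᵀ).PosSemidef := by
    have := Matrix.posSemidef_self_mul_conjTranspose A
    rwa [Matrix.conjTranspose_eq_transpose_of_trivial] at this
  have hlamI : (lam • (1 : Matrix (Fin n) (Fin n) ℝ)).PosDef := by
    rw [Matrix.smul_one_eq_diagonal]
    exact Matrix.posDef_diagonal_iff.mpr fun _ => hlam
  have hMpd : M.PosDef := Matrix.PosDef.posSemidef_add hAAT hlamI
  have hMinv : M * M⁻¹ = 1 := Matrix.mul_nonsing_inv M ((Matrix.isUnit_iff_isUnit_det M).mp hMpd.isUnit)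
  set w : Fin n → ℝ := M⁻¹ *ᵥ z with hw
  have hMw : M *ᵥ w = z := by
    rw [hw, Matrix.mulVec_mulVec, hMinv, Matrix.one_mulVec]
  -- abbreviations
  set W : ℝ := ∑ i, (w i) ^ 2 with hW
  set Z : ℝ := ∑ i, (z i) ^ 2 with hZ
  set S : ℝ := ∑ j, (((Aᵀ * M⁻¹) *ᵥ z) j) ^ 2 with hS
  have hWnn : 0 ≤ W := Finset.sum_nonneg fun i _ => sq_nonneg _
  have hZnn : 0 ≤ Z := Finset.sum_nonneg fun i _ => sq_nonneg _
  -- S = w ⬝ᵥ (A*Aᵀ) *ᵥ w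
  have hSval : S = w ⬝ᵥ ((A * Aᵀ) *ᵥ w) := by
    have h1 : (Aᵀ * M⁻¹) *ᵥ z = Aᵀ *ᵥ w := by
      rw [hw, Matrix.mulVec_mulVec]
    rw [hS, h1]
    have : ∑ j, ((Aᵀ *ᵥ w) j) ^ 2 = (Aᵀ *ᵥ w) ⬝ᵥ (Aᵀ *ᵥ w) := by
      simp [dotProduct, sq]
    rw [this, Matrix.dotProduct_mulVec, Matrix.vecMul_transpose, Matrix.mulVec_mulVec]
    exact (dotProduct_comm _ _)
  -- upper bound: S ≤ b^2 * W
  have hup : S ≤ b ^ 2 * W := by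
    have h0 := hupper.dotProduct_mulVec_nonneg w
    have hstar : star w = w := rfl
    rw [hstar, Matrix.sub_mulVec, dotProduct_sub, Matrix.smul_mulVec,
      Matrix.one_mulVec, dotProduct_smul] at h0
    have hww : w ⬝ᵥ w = W := by simp [hW, dotProduct, sq]
    rw [hww, smul_eq_mul] at h0
    rw [hSval]
    linarith [h0]
  -- lower bound: (a^2+lam) * W ≤ w ⬝ᵥ z
  have hlow : (a ^ 2 + lam) * W ≤ w ⬝ᵥ z := by
    have h0 := hlower.dotProduct_mulVec_nonneg w
    have hstar : star w = w := rfl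
    rw [hstar, Matrix.sub_mulVec, dotProduct_sub, Matrix.smul_mulVec,
      Matrix.one_mulVec, dotProduct_smul] at h0
    have hww : w ⬝ᵥ w = W := by simp [hW, dotProduct, sq]
    rw [hww, smul_eq_mul] at h0
    have hMwz : w ⬝ᵥ (M *ᵥ w) = w ⬝ᵥ z := by rw [hMw]
    have : w ⬝ᵥ (M *ᵥ w) = w ⬝ᵥ ((A * Aᵀ) *ᵥ w) + lam * W := by
      rw [hMdef, Matrix.add_mulVec, dotProduct_add, Matrix.smul_mulVec,
        Matrix.one_mulVec, dotProduct_smul, hww, smul_eq_mul]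
    rw [this] at hMwz
    linarith [h0]
  -- Cauchy-Schwarz
  have hcs : (w ⬝ᵥ z) ^ 2 ≤ W * Z := by
    have := Finset.sum_mul_sq_le_sq_mul_sq Finset.univ w z
    simpa [dotProduct, hW, hZ] using this
  have hwz : 0 ≤ w ⬝ᵥ z := le_trans (by positivity) hlow
  have hal : 0 < a ^ 2 + lam := by positivity
  -- combine: S ≤ (b/(a^2+lam))^2 * Z
  have hkey : S ≤ (b / (a ^ 2 + lam)) ^ 2 * Z :=
    ridge_aux S W Z (w ⬝ᵥ z) b (a ^ 2 + lam) hal hb hWnn hZnn hup hlow hcs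
  calc Real.sqrt S ≤ Real.sqrt ((b / (a ^ 2 + lam)) ^ 2 * Z) := Real.sqrt_le_sqrt hkey
    _ = (b / (a ^ 2 + lam)) * Real.sqrt Z := by
        rw [Real.sqrt_mul (sq_nonneg _), Real.sqrt_sq (by positivity)]
end
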